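/- Let n ≥ 1, let Σ0, Σ1 be symmetric positive definite real n×n matrices, and define A = Σ0^{−1/2}(Σ0^{1/2} Σ1 Σ0^{1/2})^{1/2} Σ0^{−1/2}. For s ∈ [0,1] set M_s = (1−s)·I + s·A and Σ_s = Σ0^{−1/2} ((1−s)Σ0 + s(Σ0^{1/2} Σ1 Σ0^{1/2})^{1/2})² Σ0^{−1/2}. Then for every s ∈ [0,1]: M_s is symmetric positive definite (in particular invertible, so the McCann interpolation map ξ ↦ (1−s)ξ + s·A ξ is the gradient of a convex function), and Σ_s = M_s Σ0 M_s; consequently Σ_s is symmetric positive definite. -/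

import Mathlib

open Matrix

lemma aux_smul_posSemidef {n : ℕ} {c : ℝ} {A : Matrix (Fin n) (Fin n) ℝ}
    (hc : 0 ≤ c) (hA : A.PosSemidef) : (c • A).PosSemidef := by
  refine .of_dotProduct_mulVec_nonneg ?_ fun x => ?_
  · unfold Matrix.IsHermitian
    rw [conjTranspose_smul, hA.1.eq]
    simp
  · rw [smul_mulVec, dotProduct_smul]
    exact mul_nonneg hc (hA.dotProduct_mulVec_nonneg x)

lemma aux_smul_posDef {n : ℕ} {c : ℝ} {A : Matrix (Fin n) (Fin n) ℝ}
    (hc : 0 < c) (hA : A.PosDef) : (c • A).PosDef := by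
  refine .of_dotProduct_mulVec_pos ?_ fun x hx => ?_
  · unfold Matrix.IsHermitian
    rw [conjTranspose_smul, hA.1.eq]
    simp
  · rw [smul_mulVec, dotProduct_smul]
    exact mul_pos hc (hA.dotProduct_mulVec_pos hx)

lemma aux_posDef_of_isUnit_det {n : ℕ} {A : Matrix (Fin n) (Fin n) ℝ}
    (hA : A.PosSemidef) (hdet : IsUnit A.det) : A.PosDef := by
  refine .of_dotProduct_mulVec_pos hA.1 fun x hx => ?_
  have h1 : A *ᵥ x ≠ 0 := by
    intro h
    apply hx
    have := mulVec_injective_iff_isUnit.mpr (isUnit_iff_isUnit_det A |>.mpr hdet)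
    exact this (by simpa using h)
  have h2 : star x ⬝ᵥ A *ᵥ x ≠ 0 := fun h => h1 ((hA.dotProduct_mulVec_zero_iff x).mp h)
  exact lt_of_le_of_ne (hA.dotProduct_mulVec_nonneg x) (Ne.symm h2)

lemma aux_posDef_conj {n : ℕ} {A B : Matrix (Fin n) (Fin n) ℝ}
    (hA : A.PosDef) (hB : IsUnit B.det) : (Bᴴ * A * B).PosDef := by
  have hps := hA.posSemidef.conjTranspose_mul_mul_same B
  apply aux_posDef_of_isUnit_det hps
  rw [det_mul, det_mul, det_conjTranspose]
  exact (hB.mul (isUnit_iff_ne_zero.mpr hA.det_pos.ne')).mul hB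

set_option maxHeartbeats 1000000 in
theorem gaussian_mccann_covariance
    (n : ℕ) (hn : 1 ≤ n)
    (Sigma0 Sigma1 : Matrix (Fin n) (Fin n) ℝ) (hSigma0 : Sigma0.PosDef)
    (hSigma1 : Sigma1.PosDef)
    (S0 : Matrix (Fin n) (Fin n) ℝ) (hS0 : S0.PosSemidef) (hS0sq : S0 ^ 2 = Sigma0)
    (M : Matrix (Fin n) (Fin n) ℝ) (hM : M.PosSemidef) (hMsq : M ^ 2 = S0 * Sigma1 * S0)
    (A : Matrix (Fin n) (Fin n) ℝ) (hA : A = S0⁻¹ * M * S0⁻¹)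
    (Ms Sigmas : ℝ → Matrix (Fin n) (Fin n) ℝ)
    (hMs : ∀ s, Ms s = (1 - s) • (1 : Matrix (Fin n) (Fin n) ℝ) + s • A)
    (hSigmas : ∀ s, Sigmas s = S0⁻¹ * ((1 - s) • Sigma0 + s • M) ^ 2 * S0⁻¹) :
    ∀ s ∈ Set.Icc (0:ℝ) 1,
      (Ms s).PosDef ∧ Sigmas s = Ms s * Sigma0 * Ms s ∧ (Sigmas s).PosDef := by
  -- S0 is positive definite
  have hS0det : IsUnit S0.det := by
    have h0 : S0.det ^ 2 = Sigma0.det := by rw [← det_pow, hS0sq]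
    refine isUnit_iff_ne_zero.mpr fun h => ?_
    have := hSigma0.det_pos
    rw [← h0, h, zero_pow (by norm_num)] at this
    exact lt_irrefl 0 this
  have hS0d : S0.PosDef := aux_posDef_of_isUnit_det hS0 hS0det
  -- M is positive definite
  have hMdet : IsUnit M.det := by
    have h0 : M.det ^ 2 = S0.det * Sigma1.det * S0.det := by
      rw [← det_pow, hMsq, det_mul, det_mul]
    refine isUnit_iff_ne_zero.mpr fun h => ?_
    have h1 : S0.det * Sigma1.det * S0.det ≠ 0 :=
      mul_ne_zero (mul_ne_zero hS0det.ne_zero hSigma1.det_pos.ne') hS0det.ne_zero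
    rw [← h0, h, zero_pow (by norm_num)] at h1
    exact h1 rfl
  have hMd : M.PosDef := aux_posDef_of_isUnit_det hM hMdet
  -- inverse facts
  have hS0inv : S0⁻¹.PosDef := hS0d.inv
  have hS0invH : (S0⁻¹)ᴴ = S0⁻¹ := hS0inv.isHermitian.eq
  have hS0invdet : IsUnit (S0⁻¹).det := isUnit_iff_ne_zero.mpr hS0inv.det_pos.ne'
  have h1 : S0⁻¹ * S0 = 1 := Matrix.nonsing_inv_mul S0 hS0det
  have h2 : S0 * S0⁻¹ = 1 := Matrix.mul_nonsing_inv S0 hS0det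
  have h3 : ∀ X : Matrix (Fin n) (Fin n) ℝ, S0⁻¹ * (S0 * X) = X := fun X => by
    rw [← Matrix.mul_assoc, h1, Matrix.one_mul]
  have h4 : ∀ X : Matrix (Fin n) (Fin n) ℝ, S0 * (S0⁻¹ * X) = X := fun X => by
    rw [← Matrix.mul_assoc, h2, Matrix.one_mul]
  have hS0mul : S0⁻¹ * Sigma0 * S0⁻¹ = 1 := by
    rw [← hS0sq, pow_two, ← Matrix.mul_assoc, h1, Matrix.one_mul, h2]
  -- A is positive definite
  have hAd : A.PosDef := by
    have h := aux_posDef_conj hMd hS0invdet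
    rwa [hS0invH, ← hA] at h
  intro s hs
  obtain ⟨hs0, hs1⟩ := hs
  -- Ms s is positive definite
  have hMsPD : (Ms s).PosDef := by
    rw [hMs s]
    rcases eq_or_lt_of_le hs0 with h | h
    · simp only [← h, sub_zero, one_smul, zero_smul, add_zero]
      exact Matrix.PosDef.one
    · exact Matrix.PosDef.posSemidef_add
        (aux_smul_posSemidef (by linarith) Matrix.PosSemidef.one)
        (aux_smul_posDef h hAd)
  -- key factorization : Ms s = S0⁻¹ * B * S0⁻¹
  set B := (1 - s) • Sigma0 + s • M with hB
  have hMsfac : Ms s = S0⁻¹ * B * S0⁻¹ := by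
    rw [hMs s, hB, hA]
    rw [Matrix.mul_add, Matrix.add_mul, Matrix.mul_smul, Matrix.mul_smul,
      Matrix.smul_mul, Matrix.smul_mul, hS0mul]
  have hkey : Sigmas s = Ms s * Sigma0 * Ms s := by
    rw [hSigmas s, ← hB, hMsfac, pow_two, ← hS0sq, pow_two]
    simp only [Matrix.mul_assoc, h3, h4]
  refine ⟨hMsPD, hkey, ?_⟩
  have : (Ms s * Sigma0 * Ms s).PosDef := by
    have := aux_posDef_conj hSigma0 (isUnit_iff_ne_zero.mpr hMsPD.det_pos.ne')
    rwa [hMsPD.isHermitian.eq] at this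
  rwa [hkey]
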